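/- arXiv:2007.01990 — 2 statements merged into one kernel-verified Lean document; each statement's English description precedes it below -/
import Mathlib

section
/- Let U be L-smooth, (α,β)-dissipative, and let 0 < η < α/L². For the discrete Langevin iteration Z(k+1) = Z(k) − η∇U(Z(k)) + √(2ητ(k))·ξ(k) in ℝᵈ, where τ(k) ∈ {τ₁, τ₂} with 0 < τ₁ < τ₂ and ξ(k) is a standard Gaussian independent of Z(k), one has E[‖Z(k+1)‖²] ≤ (1 − 2αη + 2η²L²)·E[‖Z(k)‖²] + 2(β + dτ₂)η + 2η²L²‖x*‖², where x* is a stationary point of U. -/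
open scoped RealInnerProductSpace
open MeasureTheory ProbabilityTheory Real
open scoped ENNReal NNReal

lemma my_pdf_eq : gaussianPDFReal 0 1 = fun x =>
    (Real.sqrt (2 * Real.pi))⁻¹ * Real.exp (-(1/2) * x ^ 2) := by
  ext x
  rw [gaussianPDFReal]
  norm_num
  ring_nf
  exact Or.inl trivial

lemma my_integral_gaussianReal (g : ℝ → ℝ) :
    ∫ x, g x ∂(gaussianReal 0 1)
      = ∫ x, gaussianPDFReal 0 1 x * g x := by
  rw [gaussianReal_of_var_ne_zero 0 one_ne_zero]
  have h : (gaussianPDF 0 1) = fun x => ((Real.toNNReal (gaussianPDFReal 0 1 x) : ℝ≥0) : ℝ≥0∞) := rfl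
  rw [h, integral_withDensity_eq_integral_smul
    ((measurable_gaussianPDFReal 0 1).real_toNNReal) g]
  congr 1; ext x
  simp [NNReal.smul_def, Real.coe_toNNReal _ (gaussianPDFReal_nonneg 0 1 x)]

lemma my_integrable_gaussianReal (g : ℝ → ℝ)
    (h : Integrable (fun x => gaussianPDFReal 0 1 x * g x)) :
    Integrable g (gaussianReal 0 1) := by
  rw [gaussianReal_of_var_ne_zero 0 one_ne_zero]
  have h2 : (gaussianPDF 0 1) = fun x => ((Real.toNNReal (gaussianPDFReal 0 1 x) : ℝ≥0) : ℝ≥0∞) := rfl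
  rw [h2]
  refine (integrable_withDensity_iff_integrable_smul
    ((measurable_gaussianPDFReal 0 1).real_toNNReal) (g := g)).mpr ?_
  refine h.congr (Filter.Eventually.of_forall fun x => ?_)
  simp [NNReal.smul_def, Real.coe_toNNReal _ (gaussianPDFReal_nonneg 0 1 x)]

lemma my_odd_zero : ∫ x : ℝ, x * Real.exp (-(1/2) * x ^ 2) = 0 := by
  have h := integral_neg_eq_self (fun x : ℝ => x * Real.exp (-(1/2) * x ^ 2)) volume
  have he : (fun x : ℝ => (-x) * Real.exp (-(1/2) * (-x) ^ 2))
      = fun x : ℝ => -(x * Real.exp (-(1/2) * x ^ 2)) := by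
    ext x; rw [neg_sq]; ring
  rw [he, integral_neg] at h
  linarith

lemma my_sq_int : ∫ x : ℝ, x ^ 2 * Real.exp (-(1/2) * x ^ 2) = Real.sqrt (2 * Real.pi) := by
  have habs : (fun x : ℝ => x ^ 2 * Real.exp (-(1/2) * x ^ 2))
      = fun x : ℝ => |x| ^ 2 * Real.exp (-(1/2) * |x| ^ 2) := by
    ext x; rw [sq_abs]
  rw [habs, integral_comp_abs (f := fun x : ℝ => x ^ 2 * Real.exp (-(1/2) * x ^ 2))]
  have hrpow : ∀ x : ℝ, x ^ (2 : ℝ) = x ^ (2 : ℕ) := fun x => by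
    rw [show (2:ℝ) = ((2:ℕ):ℝ) by norm_num, Real.rpow_natCast]
  have h := integral_rpow_mul_exp_neg_mul_rpow (p := 2) (q := 2) (b := 1/2)
    (by norm_num) (by norm_num) (by norm_num)
  simp_rw [hrpow] at h
  rw [h]
  have hgamma : Real.Gamma (((2:ℝ) + 1) / 2) = Real.sqrt Real.pi / 2 := by
    rw [show ((2:ℝ) + 1) / 2 = 1/2 + 1 by norm_num, Real.Gamma_add_one (by norm_num),
      Real.Gamma_one_half_eq]
    ring
  have hb : ((1:ℝ)/2) ^ (-((2:ℝ) + 1) / 2) = 2 * Real.sqrt 2 := by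
    rw [show (-((2:ℝ) + 1) / 2) = -(3/2 : ℝ) by norm_num, one_div,
      Real.inv_rpow (by norm_num : (0:ℝ) ≤ 2), Real.rpow_neg (by norm_num : (0:ℝ) ≤ 2),
      inv_inv, show (3:ℝ)/2 = 1 + 1/2 by norm_num,
      Real.rpow_add (by norm_num : (0:ℝ) < 2), Real.rpow_one, ← Real.sqrt_eq_rpow]
  rw [hgamma, hb, Real.sqrt_mul (by norm_num : (0:ℝ) ≤ 2)]
  ring

lemma my_sqrt_two_pi_pos : 0 < Real.sqrt (2 * Real.pi) :=
  Real.sqrt_pos.mpr (by positivity)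

lemma my_gauss_id_integrable : Integrable (fun x : ℝ => x) (gaussianReal 0 1) := by
  refine my_integrable_gaussianReal _ ?_
  rw [my_pdf_eq]
  simp_rw [mul_assoc]
  refine Integrable.const_mul ?_ _
  have h := integrable_mul_exp_neg_mul_sq (b := 1/2) (by norm_num)
  refine h.congr (Filter.Eventually.of_forall fun x => ?_)
  ring_nf

lemma my_gauss_id_mean : ∫ x, x ∂(gaussianReal 0 1) = 0 := by
  rw [my_integral_gaussianReal, my_pdf_eq]
  simp_rw [mul_assoc]
  rw [integral_const_mul]
  have : (fun x : ℝ => Real.exp (-(1/2) * x ^ 2) * x) = fun x : ℝ => x * Real.exp (-(1/2) * x ^ 2) := by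
    ext x; ring
  rw [this, my_odd_zero, mul_zero]

lemma my_gauss_sq_integrable : Integrable (fun x : ℝ => x ^ 2) (gaussianReal 0 1) := by
  refine my_integrable_gaussianReal _ ?_
  rw [my_pdf_eq]
  simp_rw [mul_assoc]
  refine Integrable.const_mul ?_ _
  have h := integrable_rpow_mul_exp_neg_mul_sq (b := 1/2) (by norm_num) (s := 2) (by norm_num)
  have hrpow : ∀ x : ℝ, x ^ (2 : ℝ) = x ^ (2 : ℕ) := fun x => by
    rw [show (2:ℝ) = ((2:ℕ):ℝ) by norm_num, Real.rpow_natCast]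
  simp_rw [hrpow] at h
  refine h.congr (Filter.Eventually.of_forall fun x => ?_)
  ring_nf

lemma my_gauss_sq_mean : ∫ x, x ^ 2 ∂(gaussianReal 0 1) = 1 := by
  rw [my_integral_gaussianReal, my_pdf_eq]
  simp_rw [mul_assoc]
  rw [integral_const_mul]
  have : (fun x : ℝ => Real.exp (-(1/2) * x ^ 2) * x ^ 2)
      = fun x : ℝ => x ^ 2 * Real.exp (-(1/2) * x ^ 2) := by
    ext x; ring
  rw [this, my_sq_int]
  field_simp
open scoped RealInnerProductSpace
open MeasureTheory ProbabilityTheory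

section helpers
variable {d : ℕ}

lemma my_norm_sq_eq (x : EuclideanSpace ℝ (Fin d)) : ‖x‖ ^ 2 = ∑ i, (x i) ^ 2 := by
  rw [EuclideanSpace.norm_eq, Real.sq_sqrt (by positivity)]
  simp [Real.norm_eq_abs, sq_abs]

lemma my_abs_coord_le (x : EuclideanSpace ℝ (Fin d)) (i : Fin d) : |x i| ≤ ‖x‖ := by
  have h1 : (x i) ^ 2 ≤ ‖x‖ ^ 2 := by
    rw [my_norm_sq_eq]
    exact Finset.single_le_sum (fun j _ => sq_nonneg (x j)) (Finset.mem_univ i)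
  calc |x i| = Real.sqrt ((x i) ^ 2) := (Real.sqrt_sq_eq_abs _).symm
    _ ≤ Real.sqrt (‖x‖ ^ 2) := Real.sqrt_le_sqrt h1
    _ = ‖x‖ := Real.sqrt_sq (norm_nonneg x)

lemma my_inner_eq (a b : EuclideanSpace ℝ (Fin d)) : ⟪a, b⟫ = ∑ i, a i * b i := by
  simp [PiLp.inner_apply, RCLike.inner_apply, conj_trivial]
  exact Finset.sum_congr rfl fun _ _ => mul_comm _ _

lemma my_coord_meas (i : Fin d) : Measurable (fun x : EuclideanSpace ℝ (Fin d) => x i) :=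
  (EuclideanSpace.proj i).continuous.measurable

end helpers

open scoped RealInnerProductSpace


set_option maxHeartbeats 2000000 in
theorem discrete_iterate_second_moment_bound (d : ℕ)
    {Ω : Type*} [MeasurableSpace Ω] (P : Measure Ω) [IsProbabilityMeasure P]
    (gradU : EuclideanSpace ℝ (Fin d) → EuclideanSpace ℝ (Fin d))
    (L α β τ₁ τ₂ : ℝ) (hL : 0 < L) (hα : 0 < α) (hβ : 0 < β)
    (hτ₁ : 0 < τ₁) (hτ₁₂ : τ₁ < τ₂)
    (hsmooth : ∀ x y : EuclideanSpace ℝ (Fin d),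
      ‖gradU x - gradU y‖ ≤ L * ‖x - y‖)
    (hdiss : ∀ x : EuclideanSpace ℝ (Fin d), α * ‖x‖ ^ 2 - β ≤ ⟪x, gradU x⟫)
    (xstar : EuclideanSpace ℝ (Fin d)) (hstar : gradU xstar = 0)
    (η : ℝ) (hη0 : 0 < η) (hη1 : η < α / L ^ 2)
    (Z Znext ξ : Ω → EuclideanSpace ℝ (Fin d)) (τk : Ω → ℝ)
    (hZmeas : Measurable Z) (hξmeas : Measurable ξ)
    -- τ(k) takes values in {τ₁, τ₂} and is σ(Z(k))-measurable
    (hτval : ∀ ω, τk ω = τ₁ ∨ τk ω = τ₂)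
    (hτZ : ∃ φ : EuclideanSpace ℝ (Fin d) → ℝ, Measurable φ ∧ τk = φ ∘ Z)
    -- the discrete Langevin update
    (hupdate : ∀ ω, Znext ω
      = Z ω - η • gradU (Z ω) + Real.sqrt (2 * η * τk ω) • ξ ω)
    -- ξ(k) is a standard Gaussian: i.i.d. standard normal coordinates
    (hgauss : ∀ i : Fin d,
      Measure.map (fun ω => ξ ω i) P = gaussianReal 0 1)
    (hcoordindep : iIndepFun
      (fun i ω => ξ ω i) P)
    -- ξ(k) is independent of (Z(k), τ(k))
    (hindep : IndepFun ξ (fun ω => (Z ω, τk ω)) P)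
    -- finite second moments
    (hZint : Integrable (fun ω => ‖Z ω‖ ^ 2) P)
    (hZnextint : Integrable (fun ω => ‖Znext ω‖ ^ 2) P) :
    (∫ ω, ‖Znext ω‖ ^ 2 ∂P)
      ≤ (1 - 2 * α * η + 2 * η ^ 2 * L ^ 2) * (∫ ω, ‖Z ω‖ ^ 2 ∂P)
        + 2 * (β + d * τ₂) * η + 2 * η ^ 2 * L ^ 2 * ‖xstar‖ ^ 2 := by
  classical
  have hgradcont : Continuous gradU := by
    have hl : LipschitzWith (Real.toNNReal L) gradU := by
      apply LipschitzWith.of_dist_le_mul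
      intro x y
      rw [dist_eq_norm, dist_eq_norm]
      simpa [Real.coe_toNNReal _ hL.le] using hsmooth x y
    exact hl.continuous
  obtain ⟨φ, hφmeas, hτeq⟩ := hτZ
  have hτmeas : Measurable τk := by rw [hτeq]; exact hφmeas.comp hZmeas
  set A : Ω → EuclideanSpace ℝ (Fin d) := fun ω => Z ω - η • gradU (Z ω) with hAdef
  have hAmeas : Measurable A :=
    hZmeas.sub ((hgradcont.measurable.comp hZmeas).const_smul η)
  have hτub : ∀ ω, τk ω ≤ τ₂ := by
    intro ω; rcases hτval ω with h | h <;> rw [h]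
    linarith
  have hτlb : ∀ ω, 0 < τk ω := by
    intro ω; rcases hτval ω with h | h <;> rw [h] <;> linarith
  have hτnn : ∀ ω, 0 ≤ 2 * η * τk ω := by
    intro ω; have := hτlb ω; nlinarith
  have hgrad_le : ∀ x : EuclideanSpace ℝ (Fin d), ‖gradU x‖ ≤ L * ‖x - xstar‖ := by
    intro x; simpa [hstar] using hsmooth x xstar
  -- pointwise expansion of the square
  have hexpand : ∀ ω, ‖Znext ω‖ ^ 2
      = ‖A ω‖ ^ 2 + 2 * (Real.sqrt (2 * η * τk ω) * ⟪A ω, ξ ω⟫)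
        + (2 * η * τk ω) * ‖ξ ω‖ ^ 2 := by
    intro ω
    have h0 : Znext ω = A ω + Real.sqrt (2 * η * τk ω) • ξ ω := hupdate ω
    rw [h0, norm_add_sq_real, real_inner_smul_right, norm_smul, Real.norm_eq_abs,
      abs_of_nonneg (Real.sqrt_nonneg _), mul_pow, Real.sq_sqrt (hτnn ω)]
  -- pointwise bound on the drift part
  have hAb : ∀ ω, ‖A ω‖ ^ 2 ≤ (1 - 2 * α * η + 2 * η ^ 2 * L ^ 2) * ‖Z ω‖ ^ 2
      + (2 * β * η + 2 * η ^ 2 * L ^ 2 * ‖xstar‖ ^ 2) := by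
    intro ω
    have h1 : ‖A ω‖ ^ 2 = ‖Z ω‖ ^ 2 - 2 * (η * ⟪Z ω, gradU (Z ω)⟫)
        + η ^ 2 * ‖gradU (Z ω)‖ ^ 2 := by
      show ‖Z ω - η • gradU (Z ω)‖ ^ 2 = _
      rw [norm_sub_sq_real, real_inner_smul_right, norm_smul, Real.norm_eq_abs, mul_pow, sq_abs]
    have h2 := hdiss (Z ω)
    have h3 : ‖gradU (Z ω)‖ ≤ L * ‖Z ω - xstar‖ := hgrad_le (Z ω)
    have h4 : ‖Z ω - xstar‖ ≤ ‖Z ω‖ + ‖xstar‖ := norm_sub_le _ _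
    have h5 : ‖gradU (Z ω)‖ ^ 2 ≤ L ^ 2 * (‖Z ω‖ + ‖xstar‖) ^ 2 := by
      nlinarith [norm_nonneg (gradU (Z ω)), norm_nonneg (Z ω - xstar), hL.le,
        mul_le_mul_of_nonneg_left h4 hL.le]
    have h6 : 2 * η * (α * ‖Z ω‖ ^ 2 - β) ≤ 2 * η * ⟪Z ω, gradU (Z ω)⟫ :=
      mul_le_mul_of_nonneg_left h2 (by linarith)
    have h7 : η ^ 2 * ‖gradU (Z ω)‖ ^ 2 ≤ η ^ 2 * (L ^ 2 * (‖Z ω‖ + ‖xstar‖) ^ 2) :=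
      mul_le_mul_of_nonneg_left h5 (sq_nonneg η)
    have h8 : (‖Z ω‖ + ‖xstar‖) ^ 2 ≤ 2 * ‖Z ω‖ ^ 2 + 2 * ‖xstar‖ ^ 2 := by
      nlinarith [sq_nonneg (‖Z ω‖ - ‖xstar‖)]
    have h9 : η ^ 2 * (L ^ 2 * (‖Z ω‖ + ‖xstar‖) ^ 2)
        ≤ η ^ 2 * (L ^ 2 * (2 * ‖Z ω‖ ^ 2 + 2 * ‖xstar‖ ^ 2)) :=
      mul_le_mul_of_nonneg_left (mul_le_mul_of_nonneg_left h8 (sq_nonneg L)) (sq_nonneg η)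
    rw [h1]; nlinarith
  -- integrability of ‖A‖²
  have hA2int : Integrable (fun ω => ‖A ω‖ ^ 2) P := by
    refine Integrable.mono'
      ((hZint.const_mul (2 * (1 + η * L) ^ 2)).add
        (integrable_const (2 * η ^ 2 * L ^ 2 * ‖xstar‖ ^ 2)))
      ((hAmeas.norm.pow_const 2).aestronglyMeasurable)
      (Filter.Eventually.of_forall fun ω => ?_)
    rw [Real.norm_eq_abs, abs_of_nonneg (sq_nonneg _)]
    have h1 : ‖A ω‖ ≤ ‖Z ω‖ + η * ‖gradU (Z ω)‖ := by
      calc ‖A ω‖ ≤ ‖Z ω‖ + ‖η • gradU (Z ω)‖ := norm_sub_le _ _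
        _ = ‖Z ω‖ + η * ‖gradU (Z ω)‖ := by
            rw [norm_smul, Real.norm_eq_abs, abs_of_nonneg hη0.le]
    have h3 : ‖gradU (Z ω)‖ ≤ L * (‖Z ω‖ + ‖xstar‖) := by
      have := hgrad_le (Z ω); have := norm_sub_le (Z ω) xstar
      nlinarith [hL.le]
    have h4 : ‖A ω‖ ≤ (1 + η * L) * ‖Z ω‖ + η * L * ‖xstar‖ := by
      have h5 := mul_le_mul_of_nonneg_left h3 hη0.le
      linarith
    have h6 : ‖A ω‖ ^ 2 ≤ ((1 + η * L) * ‖Z ω‖ + η * L * ‖xstar‖) ^ 2 :=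
      pow_le_pow_left₀ (norm_nonneg _) h4 2
    have h7 : ((1 + η * L) * ‖Z ω‖ + η * L * ‖xstar‖) ^ 2
        ≤ 2 * (1 + η * L) ^ 2 * ‖Z ω‖ ^ 2 + 2 * η ^ 2 * L ^ 2 * ‖xstar‖ ^ 2 := by
      nlinarith [sq_nonneg ((1 + η * L) * ‖Z ω‖ - η * L * ‖xstar‖)]
    simp only [Pi.add_apply]
    linarith
  have hAnormint : Integrable (fun ω => ‖A ω‖) P := by
    refine Integrable.mono' ((integrable_const (1 : ℝ)).add hA2int)
      hAmeas.norm.aestronglyMeasurable (Filter.Eventually.of_forall fun ω => ?_)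
    rw [norm_norm]
    simp only [Pi.add_apply]
    nlinarith [sq_nonneg (‖A ω‖ - 1/2)]
  -- coordinates of ξ
  have hξi_meas : ∀ i, Measurable (fun ω => ξ ω i) := fun i => (my_coord_meas i).comp hξmeas
  have hξi_int : ∀ i, Integrable (fun ω => ξ ω i) P := by
    intro i
    have h := my_gauss_id_integrable
    rw [← hgauss i] at h
    exact (integrable_map_measure measurable_id.aestronglyMeasurable
      (hξi_meas i).aemeasurable).mp h
  have hξi_mean : ∀ i, ∫ ω, ξ ω i ∂P = 0 := by
    intro i
    have h2 : ∫ ω, ξ ω i ∂P = ∫ x, x ∂(Measure.map (fun ω => ξ ω i) P) :=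
      (integral_map (hξi_meas i).aemeasurable aestronglyMeasurable_id).symm
    rw [h2, hgauss i]
    exact my_gauss_id_mean
  have hξi2_int : ∀ i, Integrable (fun ω => (ξ ω i) ^ 2) P := by
    intro i
    have h := my_gauss_sq_integrable
    rw [← hgauss i] at h
    exact (integrable_map_measure (measurable_id.pow_const 2).aestronglyMeasurable
      (hξi_meas i).aemeasurable).mp h
  have hξi2_mean : ∀ i, ∫ ω, (ξ ω i) ^ 2 ∂P = 1 := by
    intro i
    have hm : AEStronglyMeasurable (fun x : ℝ => x ^ 2) (Measure.map (fun ω => ξ ω i) P) :=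
      (measurable_id.pow_const 2).aestronglyMeasurable
    have h2 : ∫ ω, (ξ ω i) ^ 2 ∂P = ∫ x, x ^ 2 ∂(Measure.map (fun ω => ξ ω i) P) :=
      (integral_map (hξi_meas i).aemeasurable hm).symm
    rw [h2, hgauss i]
    exact my_gauss_sq_mean
  have hξnormeq : (fun ω => ‖ξ ω‖ ^ 2) = fun ω => ∑ i, (ξ ω i) ^ 2 := by
    ext ω; exact my_norm_sq_eq (ξ ω)
  have hξnorm2int : Integrable (fun ω => ‖ξ ω‖ ^ 2) P := by
    rw [hξnormeq]; exact integrable_finset_sum _ fun i _ => hξi2_int i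
  have hξnorm2 : ∫ ω, ‖ξ ω‖ ^ 2 ∂P = (d : ℝ) := by
    rw [hξnormeq, integral_finset_sum _ fun i _ => hξi2_int i]
    simp [hξi2_mean]
  -- the noise term
  have hnoiseint : Integrable (fun ω => (2 * η * τk ω) * ‖ξ ω‖ ^ 2) P := by
    refine Integrable.bdd_mul hξnorm2int
      ((hτmeas.const_mul (2 * η)).aestronglyMeasurable) (c := 2 * η * τ₂) (Filter.Eventually.of_forall fun ω => ?_)
    rw [Real.norm_eq_abs, abs_of_nonneg (hτnn ω)]
    nlinarith [hτub ω, hη0.le]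
  have hnoise_le : ∫ ω, (2 * η * τk ω) * ‖ξ ω‖ ^ 2 ∂P ≤ 2 * η * τ₂ * (d : ℝ) := by
    have hmono : ∫ ω, (2 * η * τk ω) * ‖ξ ω‖ ^ 2 ∂P
        ≤ ∫ ω, 2 * η * τ₂ * ‖ξ ω‖ ^ 2 ∂P := by
      refine integral_mono hnoiseint (hξnorm2int.const_mul _) fun ω => ?_
      have h1 : 2 * η * τk ω ≤ 2 * η * τ₂ := by nlinarith [hτub ω, hη0.le]
      exact mul_le_mul_of_nonneg_right h1 (sq_nonneg _)
    calc ∫ ω, (2 * η * τk ω) * ‖ξ ω‖ ^ 2 ∂P ≤ ∫ ω, 2 * η * τ₂ * ‖ξ ω‖ ^ 2 ∂P := hmono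
      _ = 2 * η * τ₂ * ∫ ω, ‖ξ ω‖ ^ 2 ∂P := integral_const_mul _ _
      _ = 2 * η * τ₂ * (d : ℝ) := by rw [hξnorm2]
  -- cross terms
  have hWi : ∀ i, Integrable (fun ω => Real.sqrt (2 * η * τk ω) * A ω i) P := by
    intro i
    refine Integrable.mono' (hAnormint.const_mul (Real.sqrt (2 * η * τ₂))) ?_
      (Filter.Eventually.of_forall fun ω => ?_)
    · exact ((Real.continuous_sqrt.measurable.comp (hτmeas.const_mul (2 * η))).mul
        ((my_coord_meas i).comp hAmeas)).aestronglyMeasurable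
    · rw [Real.norm_eq_abs, abs_mul, abs_of_nonneg (Real.sqrt_nonneg _)]
      have h1 : Real.sqrt (2 * η * τk ω) ≤ Real.sqrt (2 * η * τ₂) :=
        Real.sqrt_le_sqrt (by nlinarith [hτub ω, hη0.le])
      have h2 : |A ω i| ≤ ‖A ω‖ := my_abs_coord_le _ i
      exact mul_le_mul h1 h2 (abs_nonneg _) (Real.sqrt_nonneg _)
  have hcross_i : ∀ i, Integrable (fun ω => Real.sqrt (2 * η * τk ω) * A ω i * ξ ω i) P ∧
      ∫ ω, Real.sqrt (2 * η * τk ω) * A ω i * ξ ω i ∂P = 0 := by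
    intro i
    have hψmeas : Measurable (fun p : (EuclideanSpace ℝ (Fin d)) × ℝ =>
        Real.sqrt (2 * η * p.2) * ((p.1 - η • gradU p.1) i)) := by
      refine Measurable.mul ?_ ?_
      · exact Real.continuous_sqrt.measurable.comp (measurable_snd.const_mul (2 * η))
      · exact (my_coord_meas i).comp
          (measurable_fst.sub ((hgradcont.measurable.comp measurable_fst).const_smul η))
    have hid : IndepFun (fun ω => Real.sqrt (2 * η * τk ω) * A ω i) (fun ω => ξ ω i) P :=
      hindep.symm.comp hψmeas (my_coord_meas i)
    have hint := hid.integrable_mul (hWi i) (hξi_int i)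
    have hval := hid.integral_mul_eq_mul_integral (hWi i).aestronglyMeasurable (hξi_int i).aestronglyMeasurable
    rw [hξi_mean i, mul_zero] at hval
    exact ⟨hint, hval⟩
  have hcrosseq : (fun ω => Real.sqrt (2 * η * τk ω) * ⟪A ω, ξ ω⟫)
      = fun ω => ∑ i, Real.sqrt (2 * η * τk ω) * A ω i * ξ ω i := by
    ext ω; rw [my_inner_eq, Finset.mul_sum]
    refine Finset.sum_congr rfl fun i _ => by ring
  have hcrossint : Integrable (fun ω => Real.sqrt (2 * η * τk ω) * ⟪A ω, ξ ω⟫) P := by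
    rw [hcrosseq]; exact integrable_finset_sum _ fun i _ => (hcross_i i).1
  have hcrosszero : ∫ ω, Real.sqrt (2 * η * τk ω) * ⟪A ω, ξ ω⟫ ∂P = 0 := by
    rw [hcrosseq, integral_finset_sum _ fun i _ => (hcross_i i).1]
    exact Finset.sum_eq_zero fun i _ => (hcross_i i).2
  -- split the integral
  have hsplit : ∫ ω, ‖Znext ω‖ ^ 2 ∂P
      = (∫ ω, ‖A ω‖ ^ 2 ∂P)
        + 2 * ∫ ω, Real.sqrt (2 * η * τk ω) * ⟪A ω, ξ ω⟫ ∂P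
        + ∫ ω, (2 * η * τk ω) * ‖ξ ω‖ ^ 2 ∂P := by
    have h1 : (fun ω => ‖Znext ω‖ ^ 2)
        = fun ω => (‖A ω‖ ^ 2 + 2 * (Real.sqrt (2 * η * τk ω) * ⟪A ω, ξ ω⟫))
          + (2 * η * τk ω) * ‖ξ ω‖ ^ 2 := by
      ext ω; rw [hexpand ω]
    have hi3 : Integrable (fun ω => 2 * (Real.sqrt (2 * η * τk ω) * ⟪A ω, ξ ω⟫)) P :=
      hcrossint.const_mul 2
    have hi2 : Integrable (fun ω => ‖A ω‖ ^ 2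
        + 2 * (Real.sqrt (2 * η * τk ω) * ⟪A ω, ξ ω⟫)) P := hA2int.add hi3
    rw [h1, integral_add hi2 hnoiseint, integral_add hA2int hi3, integral_const_mul]
  have hAint_le : ∫ ω, ‖A ω‖ ^ 2 ∂P
      ≤ (1 - 2 * α * η + 2 * η ^ 2 * L ^ 2) * (∫ ω, ‖Z ω‖ ^ 2 ∂P)
        + (2 * β * η + 2 * η ^ 2 * L ^ 2 * ‖xstar‖ ^ 2) := by
    have hmono := integral_mono hA2int
      ((hZint.const_mul (1 - 2 * α * η + 2 * η ^ 2 * L ^ 2)).add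
        (integrable_const (2 * β * η + 2 * η ^ 2 * L ^ 2 * ‖xstar‖ ^ 2)))
      (fun ω => hAb ω)
    calc ∫ ω, ‖A ω‖ ^ 2 ∂P
        ≤ ∫ ω, ((1 - 2 * α * η + 2 * η ^ 2 * L ^ 2) * ‖Z ω‖ ^ 2
          + (2 * β * η + 2 * η ^ 2 * L ^ 2 * ‖xstar‖ ^ 2)) ∂P := hmono
      _ = (1 - 2 * α * η + 2 * η ^ 2 * L ^ 2) * (∫ ω, ‖Z ω‖ ^ 2 ∂P)
          + (2 * β * η + 2 * η ^ 2 * L ^ 2 * ‖xstar‖ ^ 2) := by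
        rw [integral_add (hZint.const_mul _) (integrable_const _), integral_const_mul,
          integral_const]
        simp
  rw [hsplit, hcrosszero, mul_zero, add_zero]
  have hd : (0:ℝ) ≤ (d : ℝ) := Nat.cast_nonneg d
  linarith [hnoise_le, hAint_le]
end

section
/- Let V(x₁,x₂) = exp( (α/4)·(‖x₁‖²/τ₁ + ‖x₂‖²/τ₂) ) and let L⁰ be the generator L⁰f = −⟨∇_{x₁}f, ∇U(x₁)⟩ + τ₁Δ_{x₁}f − ⟨∇_{x₂}f, ∇U(x₂)⟩ + τ₂Δ_{x₂}f. If U is (α,β)-dissipative, then there exist λ > 0, b ≥ 0, and r > 0 such that L⁰V(x₁,x₂) ≤ −λ·V(x₁,x₂) + b·1_{B_r}(x₁,x₂) for all (x₁,x₂) ∈ ℝᵈ × ℝᵈ, where B_r is the centered ball of radius r in ℝ²ᵈ. -/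
open scoped RealInnerProductSpace

/-- Laplacian of a real-valued function on Euclidean space,
as the sum of second partial derivatives along the standard basis. -/
noncomputable def eLaplacian {n : ℕ} (f : EuclideanSpace ℝ (Fin n) → ℝ)
    (x : EuclideanSpace ℝ (Fin n)) : ℝ :=
  ∑ i : Fin n, fderiv ℝ (fun y => fderiv ℝ f y (EuclideanSpace.single i 1)) x
    (EuclideanSpace.single i 1)

section Helpers
variable {d : ℕ}
local notation "E" => EuclideanSpace ℝ (Fin d)
theorem expsq_hasFDerivAt (c k : ℝ) (x : E) :
    HasFDerivAt (fun y : E => Real.exp (c * ‖y‖ ^ 2 + k))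
      ((Real.exp (c * ‖x‖ ^ 2 + k) * (2 * c)) • innerSL ℝ x) x := by
  have hg : HasFDerivAt (fun y : E => c * ‖y‖ ^ 2 + k) ((2 * c) • innerSL ℝ x) x := by
    have h1 : HasFDerivAt (fun y : E => ‖y‖ ^ 2) (2 • innerSL ℝ x) x :=
      (hasStrictFDerivAt_norm_sq x).hasFDerivAt
    have := (h1.const_mul c).add_const k
    refine this.congr_fderiv ?_
    ext y
    simp [smul_smul]
    ring
  have := (Real.hasDerivAt_exp (c * ‖x‖ ^ 2 + k)).comp_hasFDerivAt x hg
  refine this.congr_fderiv ?_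
  rw [smul_smul]

theorem expsq_fderiv_apply (c k : ℝ) (x v : E) :
    fderiv ℝ (fun y : E => Real.exp (c * ‖y‖ ^ 2 + k)) x v
      = Real.exp (c * ‖x‖ ^ 2 + k) * (2 * c) * ⟪x, v⟫ := by
  rw [(expsq_hasFDerivAt c k x).fderiv]
  simp [mul_assoc]

theorem expsq_second (c k : ℝ) (x v : E) :
    fderiv ℝ (fun y : E =>
        fderiv ℝ (fun z : E => Real.exp (c * ‖z‖ ^ 2 + k)) y v) x v
      = Real.exp (c * ‖x‖ ^ 2 + k) * (2 * c * ⟪v, v⟫ + 4 * c ^ 2 * ⟪x, v⟫ ^ 2) := by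
  have heq : (fun y : E => fderiv ℝ (fun z : E => Real.exp (c * ‖z‖ ^ 2 + k)) y v)
      = fun y : E => (Real.exp (c * ‖y‖ ^ 2 + k) * (2 * c)) * ⟪y, v⟫ := by
    funext y
    rw [expsq_fderiv_apply]
  rw [heq]
  have h1 : HasFDerivAt (fun y : E => Real.exp (c * ‖y‖ ^ 2 + k) * (2 * c))
      ((2 * c) • ((Real.exp (c * ‖x‖ ^ 2 + k) * (2 * c)) • innerSL ℝ x)) x := by
    simpa [mul_comm] using (expsq_hasFDerivAt c k x).const_mul (2 * c)
  have h2 : HasFDerivAt (fun y : E => (⟪y, v⟫ : ℝ)) ((innerSL ℝ : E →L[ℝ] E →L[ℝ] ℝ).flip v) x :=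
    ((innerSL ℝ : E →L[ℝ] E →L[ℝ] ℝ).flip v).hasFDerivAt
  have := (h1.mul h2).fderiv
  erw [this]
  simp only [ContinuousLinearMap.add_apply, ContinuousLinearMap.smul_apply,
    ContinuousLinearMap.flip_apply, innerSL_apply_apply, smul_eq_mul]
  ring_nf

theorem expsq_gradient (c k : ℝ) (x : E) :
    gradient (fun y : E => Real.exp (c * ‖y‖ ^ 2 + k)) x
      = (Real.exp (c * ‖x‖ ^ 2 + k) * (2 * c)) • x := by
  refine HasGradientAt.gradient ?_
  rw [hasGradientAt_iff_hasFDerivAt]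
  refine (expsq_hasFDerivAt c k x).congr_fderiv ?_
  ext y
  simp [InnerProductSpace.toDual_apply_apply, real_inner_smul_left]

theorem expsq_eLaplacian (c k : ℝ) (x : E) :
    eLaplacian (fun y : E => Real.exp (c * ‖y‖ ^ 2 + k)) x
      = Real.exp (c * ‖x‖ ^ 2 + k) * (2 * c * d + 4 * c ^ 2 * ‖x‖ ^ 2) := by
  unfold eLaplacian
  have h : ∀ i : Fin d,
      fderiv ℝ (fun y : E => fderiv ℝ (fun z : E => Real.exp (c * ‖z‖ ^ 2 + k)) y
        (EuclideanSpace.single i 1)) x (EuclideanSpace.single i 1)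
      = Real.exp (c * ‖x‖ ^ 2 + k) * (2 * c * 1 + 4 * c ^ 2 * (x i) ^ 2) := by
    intro i
    rw [expsq_second]
    congr 2
    · simp [EuclideanSpace.inner_single_right]
    · congr 1
      simp [EuclideanSpace.inner_single_right]
  simp only [h]
  rw [← Finset.mul_sum]
  congr 1
  have hx : (‖x‖ : ℝ) ^ 2 = ∑ i : Fin d, (x i) ^ 2 := by
    rw [EuclideanSpace.norm_eq]
    rw [Real.sq_sqrt (by positivity)]
    simp [sq_abs]
  rw [hx, Finset.sum_add_distrib, Finset.sum_const, Finset.card_univ, ← Finset.mul_sum]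
  simp only [Fintype.card_fin, nsmul_eq_mul]
  ring

theorem drift_arith (d : ℕ) (α β τ₁ τ₂ A B g₁ g₂ : ℝ)
    (hα : 0 < α) (hτ₁ : 0 < τ₁) (hτ₂ : 0 < τ₂)
    (h1 : α * A - β ≤ g₁) (h2 : α * B - β ≤ g₂) :
    -(2 * (α / (4 * τ₁))) * g₁
      + τ₁ * (2 * (α / (4 * τ₁)) * d + 4 * (α / (4 * τ₁)) ^ 2 * A)
      + (-(2 * (α / (4 * τ₂))) * g₂)
      + τ₂ * (2 * (α / (4 * τ₂)) * d + 4 * (α / (4 * τ₂)) ^ 2 * B)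
    ≤ (α * β / (2 * τ₁) + α * β / (2 * τ₂) + α * d)
      - α * (α / (4 * τ₁) * A + α / (4 * τ₂) * B) := by
  have h₁' : 0 ≤ 2 * (α / (4 * τ₁)) * (g₁ - (α * A - β)) :=
    mul_nonneg (by positivity) (by linarith)
  have h₂' : 0 ≤ 2 * (α / (4 * τ₂)) * (g₂ - (α * B - β)) :=
    mul_nonneg (by positivity) (by linarith)
  have hid : ((α * β / (2 * τ₁) + α * β / (2 * τ₂) + α * d)
      - α * (α / (4 * τ₁) * A + α / (4 * τ₂) * B))
      - (-(2 * (α / (4 * τ₁))) * g₁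
      + τ₁ * (2 * (α / (4 * τ₁)) * d + 4 * (α / (4 * τ₁)) ^ 2 * A)
      + (-(2 * (α / (4 * τ₂))) * g₂)
      + τ₂ * (2 * (α / (4 * τ₂)) * d + 4 * (α / (4 * τ₂)) ^ 2 * B))
      = 2 * (α / (4 * τ₁)) * (g₁ - (α * A - β))
      + 2 * (α / (4 * τ₂)) * (g₂ - (α * B - β)) := by
    field_simp
    ring
  linarith

end Helpers

set_option maxHeartbeats 1000000 in
theorem lyapunov_drift_condition (d : ℕ)
    (U : EuclideanSpace ℝ (Fin d) → ℝ) (hU : ContDiff ℝ 2 U)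
    (α β τ₁ τ₂ : ℝ) (hα : 0 < α) (hβ : 0 < β) (hτ₁ : 0 < τ₁) (hτ₂ : 0 < τ₂)
    (hdiss : ∀ x : EuclideanSpace ℝ (Fin d),
      α * ‖x‖ ^ 2 - β ≤ ⟪x, gradient U x⟫)
    (V : EuclideanSpace ℝ (Fin d) × EuclideanSpace ℝ (Fin d) → ℝ)
    (hV : ∀ p, V p = Real.exp ((α / 4) * (‖p.1‖ ^ 2 / τ₁ + ‖p.2‖ ^ 2 / τ₂)))
    (L0V : EuclideanSpace ℝ (Fin d) × EuclideanSpace ℝ (Fin d) → ℝ)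
    (hL0V : ∀ p : EuclideanSpace ℝ (Fin d) × EuclideanSpace ℝ (Fin d),
      L0V p = -⟪gradient (fun y => V (y, p.2)) p.1, gradient U p.1⟫
        + τ₁ * eLaplacian (fun y => V (y, p.2)) p.1
        - ⟪gradient (fun y => V (p.1, y)) p.2, gradient U p.2⟫
        + τ₂ * eLaplacian (fun y => V (p.1, y)) p.2) :
    ∃ lam > (0:ℝ), ∃ b ≥ (0:ℝ), ∃ r > (0:ℝ),
      ∀ p : EuclideanSpace ℝ (Fin d) × EuclideanSpace ℝ (Fin d),
        L0V p ≤ -lam * V p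
          + Set.indicator {q : EuclideanSpace ℝ (Fin d) × EuclideanSpace ℝ (Fin d) |
              ‖q.1‖ ^ 2 + ‖q.2‖ ^ 2 ≤ r ^ 2} (fun _ => b) p := by
  have hτ₁' := hτ₁.ne'
  have hτ₂' := hτ₂.ne'
  set C : ℝ := α * β / (2 * τ₁) + α * β / (2 * τ₂) + α * d with hC
  have hCpos : 0 < C := by positivity
  set τM : ℝ := max τ₁ τ₂ with hτM
  set τm : ℝ := min τ₁ τ₂ with hτm
  have hτMpos : 0 < τM := lt_max_of_lt_left hτ₁
  have hτmpos : 0 < τm := lt_min hτ₁ hτ₂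
  set r : ℝ := Real.sqrt (4 * τM * (C + 1) / α ^ 2) with hr
  have hrpos : 0 < r := Real.sqrt_pos.2 (by positivity)
  have hr2 : r ^ 2 = 4 * τM * (C + 1) / α ^ 2 := Real.sq_sqrt (by positivity)
  refine ⟨1, one_pos, Real.exp (α / (4 * τm) * r ^ 2) * (C + 1),
    mul_nonneg (Real.exp_nonneg _) (by positivity), r, hrpos, ?_⟩
  intro p
  have hVp : V p = Real.exp (α / (4 * τ₁) * ‖p.1‖ ^ 2 + α / (4 * τ₂) * ‖p.2‖ ^ 2) := by
    rw [hV]; congr 1; field_simp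
  have key : L0V p = V p * (-(2 * (α / (4 * τ₁))) * ⟪p.1, gradient U p.1⟫
      + τ₁ * (2 * (α / (4 * τ₁)) * d + 4 * (α / (4 * τ₁)) ^ 2 * ‖p.1‖ ^ 2)
      + (-(2 * (α / (4 * τ₂))) * ⟪p.2, gradient U p.2⟫)
      + τ₂ * (2 * (α / (4 * τ₂)) * d + 4 * (α / (4 * τ₂)) ^ 2 * ‖p.2‖ ^ 2)) := by
    have e₁ : (fun y => V (y, p.2)) = fun y : EuclideanSpace ℝ (Fin d) =>
        Real.exp (α / (4 * τ₁) * ‖y‖ ^ 2 + α / (4 * τ₂) * ‖p.2‖ ^ 2) := by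
      funext y; rw [hV]; congr 1; field_simp
    have e₂ : (fun y => V (p.1, y)) = fun y : EuclideanSpace ℝ (Fin d) =>
        Real.exp (α / (4 * τ₂) * ‖y‖ ^ 2 + α / (4 * τ₁) * ‖p.1‖ ^ 2) := by
      funext y; rw [hV]; congr 1; field_simp; ring
    rw [hL0V, e₁, e₂, expsq_gradient, expsq_gradient, expsq_eLaplacian, expsq_eLaplacian,
      real_inner_smul_left, real_inner_smul_left, hVp,
      show α / (4 * τ₂) * ‖p.2‖ ^ 2 + α / (4 * τ₁) * ‖p.1‖ ^ 2
        = α / (4 * τ₁) * ‖p.1‖ ^ 2 + α / (4 * τ₂) * ‖p.2‖ ^ 2 from by ring]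
    ring
  set s : ℝ := α / (4 * τ₁) * ‖p.1‖ ^ 2 + α / (4 * τ₂) * ‖p.2‖ ^ 2 with hs
  have hs0 : 0 ≤ s := by positivity
  have hexp : 0 < Real.exp s := Real.exp_pos s
  have hbound : L0V p ≤ Real.exp s * (C - α * s) := by
    rw [key, hVp]
    apply mul_le_mul_of_nonneg_left _ hexp.le
    exact drift_arith d α β τ₁ τ₂ (‖p.1‖ ^ 2) (‖p.2‖ ^ 2) _ _ hα hτ₁ hτ₂
      (hdiss p.1) (hdiss p.2)
  by_cases hball : ‖p.1‖ ^ 2 + ‖p.2‖ ^ 2 ≤ r ^ 2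
  · have hind : Set.indicator {q : EuclideanSpace ℝ (Fin d) × EuclideanSpace ℝ (Fin d) |
        ‖q.1‖ ^ 2 + ‖q.2‖ ^ 2 ≤ r ^ 2} (fun _ => Real.exp (α / (4 * τm) * r ^ 2) * (C + 1)) p
        = Real.exp (α / (4 * τm) * r ^ 2) * (C + 1) :=
      Set.indicator_of_mem (show p ∈ {q : EuclideanSpace ℝ (Fin d) × EuclideanSpace ℝ (Fin d) |
        ‖q.1‖ ^ 2 + ‖q.2‖ ^ 2 ≤ r ^ 2} from hball) _
    rw [hind]
    have hsle : s ≤ α / (4 * τm) * r ^ 2 := by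
      have h1 : α / (4 * τ₁) ≤ α / (4 * τm) := by
        gcongr
        exact min_le_left _ _
      have h2 : α / (4 * τ₂) ≤ α / (4 * τm) := by
        gcongr
        exact min_le_right _ _
      calc s = α / (4 * τ₁) * ‖p.1‖ ^ 2 + α / (4 * τ₂) * ‖p.2‖ ^ 2 := hs
        _ ≤ α / (4 * τm) * ‖p.1‖ ^ 2 + α / (4 * τm) * ‖p.2‖ ^ 2 := by gcongr
        _ = α / (4 * τm) * (‖p.1‖ ^ 2 + ‖p.2‖ ^ 2) := by ring
        _ ≤ α / (4 * τm) * r ^ 2 := mul_le_mul_of_nonneg_left hball (by positivity)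
    have hVle : Real.exp s ≤ Real.exp (α / (4 * τm) * r ^ 2) := Real.exp_le_exp.2 hsle
    have hαs : 0 ≤ α * s := mul_nonneg hα.le hs0
    calc L0V p ≤ Real.exp s * (C - α * s) := hbound
      _ ≤ Real.exp s * (C + 1) - Real.exp s := by nlinarith
      _ ≤ Real.exp (α / (4 * τm) * r ^ 2) * (C + 1) - Real.exp s := by
          have : Real.exp s * (C + 1) ≤ Real.exp (α / (4 * τm) * r ^ 2) * (C + 1) :=
            mul_le_mul_of_nonneg_right hVle (by positivity)
          linarith
      _ = -1 * Real.exp s + Real.exp (α / (4 * τm) * r ^ 2) * (C + 1) := by ring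
      _ = -1 * V p + Real.exp (α / (4 * τm) * r ^ 2) * (C + 1) := by rw [hVp]
  · have hind : Set.indicator {q : EuclideanSpace ℝ (Fin d) × EuclideanSpace ℝ (Fin d) |
        ‖q.1‖ ^ 2 + ‖q.2‖ ^ 2 ≤ r ^ 2} (fun _ => Real.exp (α / (4 * τm) * r ^ 2) * (C + 1)) p
        = 0 := Set.indicator_of_notMem (show p ∉ {q : EuclideanSpace ℝ (Fin d) × EuclideanSpace ℝ (Fin d) |
        ‖q.1‖ ^ 2 + ‖q.2‖ ^ 2 ≤ r ^ 2} from hball) _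
    rw [hind, add_zero]
    have hAB : r ^ 2 ≤ ‖p.1‖ ^ 2 + ‖p.2‖ ^ 2 := le_of_not_ge hball
    have hsge : C + 1 ≤ α * s := by
      have h1 : α / (4 * τM) ≤ α / (4 * τ₁) := by
        gcongr
        exact le_max_left _ _
      have h2 : α / (4 * τM) ≤ α / (4 * τ₂) := by
        gcongr
        exact le_max_right _ _
      have hss : α / (4 * τM) * r ^ 2 ≤ s := by
        calc α / (4 * τM) * r ^ 2 ≤ α / (4 * τM) * (‖p.1‖ ^ 2 + ‖p.2‖ ^ 2) :=
              mul_le_mul_of_nonneg_left hAB (by positivity)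
          _ = α / (4 * τM) * ‖p.1‖ ^ 2 + α / (4 * τM) * ‖p.2‖ ^ 2 := by ring
          _ ≤ α / (4 * τ₁) * ‖p.1‖ ^ 2 + α / (4 * τ₂) * ‖p.2‖ ^ 2 := by gcongr
          _ = s := hs.symm
      have hval : α * (α / (4 * τM) * r ^ 2) = C + 1 := by
        rw [hr2]
        field_simp
      calc C + 1 = α * (α / (4 * τM) * r ^ 2) := hval.symm
        _ ≤ α * s := mul_le_mul_of_nonneg_left hss hα.le
    calc L0V p ≤ Real.exp s * (C - α * s) := hbound
      _ ≤ Real.exp s * (-1) := mul_le_mul_of_nonneg_left (by linarith) hexp.le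
      _ = -1 * Real.exp s := by ring
      _ = -1 * V p := by rw [hVp]
end
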